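/- For every integer k ≥ 1, we have tr((AB)^k) = 0 in R, where AB denotes the product of the matrices A and B over R and tr denotes the trace of a matrix with entries in R. -/

import Mathlib

open ExteriorAlgebra Matrix

set_option synthInstance.maxHeartbeats 1000000
set_option maxHeartbeats 1000000

/-- The subspace of pairs `(M, N)` of complex `n × n` matrices with `M`
alternating and `N` symmetric. -/
noncomputable def altSymSubmodule (n : ℕ) :
    Submodule ℂ (Matrix (Fin n) (Fin n) ℂ × Matrix (Fin n) (Fin n) ℂ) where
  carrier := {p | p.1ᵀ = -p.1 ∧ p.2ᵀ = p.2}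
  add_mem' := by
    rintro ⟨a1, a2⟩ ⟨b1, b2⟩ ⟨ha1, ha2⟩ ⟨hb1, hb2⟩
    constructor
    · show (a1 + b1)ᵀ = -(a1 + b1)
      rw [Matrix.transpose_add, ha1, hb1, neg_add]
    · show (a2 + b2)ᵀ = a2 + b2
      rw [Matrix.transpose_add, ha2, hb2]
  zero_mem' := by constructor <;> simp
  smul_mem' := by
    rintro c ⟨a1, a2⟩ ⟨h1, h2⟩
    constructor
    · show (c • a1)ᵀ = -(c • a1)
      rw [Matrix.transpose_smul, h1, smul_neg]
    · show (c • a2)ᵀ = c • a2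
      rw [Matrix.transpose_smul, h2]

section Aux

variable {n : ℕ}

local notation "W" => altSymSubmodule n
local notation "R'" => ExteriorAlgebra ℂ (altSymSubmodule n)

lemma anti (x y : W) : ι ℂ x * ι ℂ y = -(ι ℂ y * ι ℂ x) := by
  rw [eq_neg_iff_add_eq_zero]
  exact ExteriorAlgebra.ι_add_mul_swap x y

lemma central (x y : W) : ι ℂ x * ι ℂ y ∈ Subring.center R' := by
  rw [Subring.mem_center_iff]
  intro g
  induction g using ExteriorAlgebra.induction with
  | algebraMap r => exact Algebra.commutes r _
  | ι z =>
      calc ι ℂ z * (ι ℂ x * ι ℂ y) = (ι ℂ z * ι ℂ x) * ι ℂ y := by rw [mul_assoc]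
        _ = (-(ι ℂ x * ι ℂ z)) * ι ℂ y := by rw [anti z x]
        _ = -(ι ℂ x * (ι ℂ z * ι ℂ y)) := by rw [neg_mul, mul_assoc]
        _ = -(ι ℂ x * (-(ι ℂ y * ι ℂ z))) := by rw [anti z y]
        _ = (ι ℂ x * ι ℂ y) * ι ℂ z := by rw [mul_neg, neg_neg, mul_assoc]
  | mul a b ha hb => rw [mul_assoc, hb, ← mul_assoc, ha, mul_assoc]
  | add a b ha hb => rw [add_mul, mul_add, ha, hb]

end Aux

/-- The generic alternating matrix `A` with entries in
`Λ(Λ₂(V) ⊕ S₂(V*))`, whose `(i,j)` entry is the image of `(E_{ij} - E_{ji}, 0)`. -/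
noncomputable def genericAlt (n : ℕ) :
    Matrix (Fin n) (Fin n) (ExteriorAlgebra ℂ (altSymSubmodule n)) :=
  fun i j => ExteriorAlgebra.ι ℂ
    ⟨(Matrix.single i j (1 : ℂ) - Matrix.single j i (1 : ℂ), 0), by
      constructor
      · show _ = _
        ext a b
        simp [Matrix.transpose_apply, Matrix.single, and_comm]
      · simp⟩

/-- The generic symmetric matrix `B` with entries in
`Λ(Λ₂(V) ⊕ S₂(V*))`, whose `(i,j)` entry is the image of `(0, E_{ij} + E_{ji})`. -/
noncomputable def genericSym (n : ℕ) :
    Matrix (Fin n) (Fin n) (ExteriorAlgebra ℂ (altSymSubmodule n)) :=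
  fun i j => ExteriorAlgebra.ι ℂ
    ⟨(0, Matrix.single i j (1 : ℂ) + Matrix.single j i (1 : ℂ)), by
      constructor
      · simp
      · show _ = _
        ext a b
        simp only [Matrix.transpose_apply, Matrix.add_apply, Matrix.single, Matrix.of_apply, and_comm]
        rw [add_comm]⟩

section Aux2

variable {n : ℕ}

lemma hAskew (i j : Fin n) : genericAlt n j i = -genericAlt n i j := by
  rw [genericAlt, genericAlt, ← map_neg]
  congr 1
  apply Subtype.ext
  show (single j i (1:ℂ) - single i j 1, (0 : Matrix (Fin n) (Fin n) ℂ))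
      = -(single i j (1:ℂ) - single j i 1, (0 : Matrix (Fin n) (Fin n) ℂ))
  rw [Prod.neg_mk, neg_sub, neg_zero]

lemma hBsym (i j : Fin n) : genericSym n j i = genericSym n i j := by
  rw [genericSym, genericSym]
  congr 1
  apply Subtype.ext
  show ((0 : Matrix (Fin n) (Fin n) ℂ), single j i (1:ℂ) + single i j 1)
      = ((0 : Matrix (Fin n) (Fin n) ℂ), single i j (1:ℂ) + single j i 1)
  rw [add_comm]

end Aux2

section Aux3

variable {n : ℕ}

local notation "W" => altSymSubmodule n
local notation "R'" => ExteriorAlgebra ℂ (altSymSubmodule n)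

lemma centEntry (i j : Fin n) :
    (genericAlt n * genericSym n) i j ∈ Subring.center R' := by
  rw [Matrix.mul_apply]
  apply Subring.sum_mem
  intro l _
  exact central _ _

noncomputable def C0 (n : ℕ) :
    Matrix (Fin n) (Fin n)
      (Subring.center (ExteriorAlgebra ℂ (altSymSubmodule n))) :=
  fun i j => ⟨(genericAlt n * genericSym n) i j, centEntry i j⟩

lemma hC0 : genericAlt n * genericSym n
    = (C0 n).map (Subring.subtype (Subring.center R')) := by
  ext i j
  rfl

lemma trace_map_center (M : Matrix (Fin n) (Fin n) (Subring.center R')) :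
    Matrix.trace (M.map (Subring.subtype (Subring.center R')))
      = Subring.subtype (Subring.center R') (Matrix.trace M) := by
  simp [Matrix.trace, Matrix.diag, Matrix.map_apply]

lemma powCent (m : ℕ) (i j : Fin n) :
    ((genericAlt n * genericSym n) ^ m) i j ∈ Subring.center R' := by
  rw [hC0, ← RingHom.mapMatrix_apply, ← map_pow, RingHom.mapMatrix_apply,
    Matrix.map_apply]
  exact SetLike.coe_mem _

lemma trace_transpose_pow (k : ℕ) :
    Matrix.trace (((genericAlt n * genericSym n)ᵀ) ^ k)
      = Matrix.trace ((genericAlt n * genericSym n) ^ k) := by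
  set f := Subring.subtype (Subring.center R') with hf
  calc Matrix.trace (((genericAlt n * genericSym n)ᵀ) ^ k)
      = Matrix.trace ((((C0 n)ᵀ).map f) ^ k) := by
        rw [hC0, ← Matrix.transpose_map]
    _ = Matrix.trace ((f.mapMatrix ((C0 n)ᵀ)) ^ k) := by
        rw [RingHom.mapMatrix_apply]
    _ = Matrix.trace (f.mapMatrix (((C0 n)ᵀ) ^ k)) := by rw [map_pow]
    _ = f (Matrix.trace (((C0 n)ᵀ) ^ k)) := by
        rw [RingHom.mapMatrix_apply, trace_map_center]
    _ = f (Matrix.trace ((C0 n) ^ k)) := by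
        rw [← Matrix.transpose_pow, Matrix.trace_transpose]
    _ = Matrix.trace (((C0 n) ^ k).map f) := (trace_map_center _).symm
    _ = Matrix.trace ((f.mapMatrix (C0 n)) ^ k) := by
        rw [← RingHom.mapMatrix_apply, ← map_pow]
    _ = _ := by rw [RingHom.mapMatrix_apply, ← hC0]

lemma antiAB (p q r s : Fin n) :
    genericAlt n p q * genericSym n r s
      = -(genericSym n r s * genericAlt n p q) :=
  anti _ _

lemma transposeAB :
    (genericAlt n * genericSym n)ᵀ = genericSym n * genericAlt n := by
  ext i j
  rw [Matrix.transpose_apply, Matrix.mul_apply, Matrix.mul_apply]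
  refine Finset.sum_congr rfl fun l _ => ?_
  rw [hAskew l j, hBsym i l, neg_mul, antiAB l j i l, neg_neg]

lemma odd_mul (v b : W) (c : ExteriorAlgebra ℂ (altSymSubmodule n))
    (hc : c ∈ Subring.center R') :
    ι ℂ v * (ι ℂ b * c) = -((ι ℂ b * c) * ι ℂ v) := by
  have hcv : ι ℂ v * c = c * ι ℂ v := Subring.mem_center_iff.mp hc (ι ℂ v)
  calc ι ℂ v * (ι ℂ b * c) = (ι ℂ v * ι ℂ b) * c := (mul_assoc _ _ _).symm
    _ = -(ι ℂ b * ι ℂ v) * c := by rw [anti]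
    _ = -(ι ℂ b * (ι ℂ v * c)) := by rw [neg_mul, mul_assoc]
    _ = -(ι ℂ b * (c * ι ℂ v)) := by rw [hcv]
    _ = -((ι ℂ b * c) * ι ℂ v) := by rw [mul_assoc]

lemma oddM (m : ℕ) (p q i j : Fin n) :
    genericAlt n p q * ((genericSym n * (genericAlt n * genericSym n) ^ m) i j)
      = -(((genericSym n * (genericAlt n * genericSym n) ^ m) i j)
          * genericAlt n p q) := by
  rw [Matrix.mul_apply, Finset.mul_sum, Finset.sum_mul,
    ← Finset.sum_neg_distrib]
  refine Finset.sum_congr rfl fun l _ => ?_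
  exact odd_mul _ _ _ (powCent m l j)

end Aux3

lemma pow_rot' {S : Type*} [Ring S] (a b : S) (m : ℕ) :
    (b * a) ^ (m + 1) = b * (a * b) ^ m * a := by
  induction m with
  | zero => simp
  | succ m ih =>
      rw [pow_succ, ih, pow_succ]
      simp only [mul_assoc]

section Aux4

variable {n : ℕ}

lemma trace_rot (m : ℕ) :
    Matrix.trace ((genericSym n * genericAlt n) ^ (m + 1))
      = -Matrix.trace ((genericAlt n * genericSym n) ^ (m + 1)) := by
  have h1 : (genericSym n * genericAlt n) ^ (m + 1)
      = (genericSym n * (genericAlt n * genericSym n) ^ m) * genericAlt n := by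
    rw [pow_rot']
  have h2 : (genericAlt n * genericSym n) ^ (m + 1)
      = genericAlt n * (genericSym n * (genericAlt n * genericSym n) ^ m) := by
    rw [pow_succ', mul_assoc]
  rw [h1, h2]
  set M := genericSym n * (genericAlt n * genericSym n) ^ m with hM
  simp only [Matrix.trace, Matrix.diag, Matrix.mul_apply]
  rw [Finset.sum_comm, ← Finset.sum_neg_distrib]
  refine Finset.sum_congr rfl fun i _ => ?_
  rw [← Finset.sum_neg_distrib]
  refine Finset.sum_congr rfl fun l _ => ?_
  rw [oddM, neg_neg]

end Aux4

theorem trace_AB_pow_eq_zero (n : ℕ) (hn : 0 < n) (k : ℕ) (hk : 1 ≤ k) :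
    Matrix.trace ((genericAlt n * genericSym n) ^ k) = 0 := by
  obtain ⟨m, rfl⟩ : ∃ m, k = m + 1 := ⟨k - 1, by omega⟩
  set T := Matrix.trace ((genericAlt n * genericSym n) ^ (m + 1)) with hT
  have hneg : T = -T := by
    conv_lhs => rw [hT, ← trace_transpose_pow, transposeAB, trace_rot]
  have h2 : (2 : ℂ) • T = 0 := by
    rw [two_smul]
    nth_rewrite 2 [hneg]
    exact add_neg_cancel T
  calc T = ((2 : ℂ)⁻¹ * 2) • T := by norm_num
    _ = (2 : ℂ)⁻¹ • ((2 : ℂ) • T) := by rw [mul_smul]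
    _ = 0 := by rw [h2, smul_zero]
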